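/- Let U = A²_k ∪ A²_k be the complement of a k-rational point P₀ in P²_k. Then H¹(U, O_U) ≠ 0. -/

import Mathlib

open Polynomial LaurentPolynomial

private lemma laurent_mul_T_apply {k : Type*} [Field k] (q : LaurentPolynomial k)
    (j m : ℤ) : ((q * T j : LaurentPolynomial k)).coeff m = q.coeff (m - j) :=
  (AddMonoidAlgebra.coeff_mul_single_apply q 1 j m).trans (mul_one _)

/-- Every Laurent coefficient of an element of the image of the first chart map is
supported in nonnegative degrees. -/
private lemma chart1_coeff {k : Type*} [Field k] (f : MvPolynomial (Fin 2) k) :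
    ∀ (n : ℕ) (m : ℤ), m < 0 →
      ((MvPolynomial.aeval
          ![(Polynomial.C (T 1) : Polynomial (LaurentPolynomial k)), Polynomial.X]
          f : Polynomial (LaurentPolynomial k)).coeff n).coeff m = 0 := by
  induction f using MvPolynomial.induction_on with
  | C a =>
    intro n m hm
    simp only [MvPolynomial.aeval_C]
    rw [show (algebraMap k (Polynomial (LaurentPolynomial k))) a
        = Polynomial.C (AddMonoidAlgebra.single 0 a) from rfl, Polynomial.coeff_C]
    split
    · exact Finsupp.single_eq_of_ne' (by omega)
    · rfl
  | add p q hp hq =>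
    intro n m hm
    rw [map_add, Polynomial.coeff_add, AddMonoidAlgebra.coeff_add, Finsupp.add_apply, hp n m hm, hq n m hm, add_zero]
  | mul_X p i hp =>
    intro n m hm
    rw [map_mul, MvPolynomial.aeval_X]
    fin_cases i
    · simp only [Fin.mk_zero, Fin.isValue, Matrix.cons_val_zero]
      rw [Polynomial.coeff_mul_C, laurent_mul_T_apply]
      exact hp n (m - 1) (by omega)
    · simp only [Fin.mk_one, Fin.isValue, Matrix.cons_val_one, Matrix.head_cons, Matrix.cons_val_zero]
      cases n with
      | zero => rw [Polynomial.coeff_mul_X_zero]; rfl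
      | succ n => rw [Polynomial.coeff_mul_X]; exact hp n m hm

/-- Every Laurent coefficient of an element of the image of the second chart map has
degree at most `-n` in degree `n` in `X`. -/
private lemma chart2_coeff {k : Type*} [Field k] (g : MvPolynomial (Fin 2) k) :
    ∀ (n : ℕ) (m : ℤ), 0 < m + n →
      ((MvPolynomial.aeval
          ![(Polynomial.C (T (-1)) : Polynomial (LaurentPolynomial k)),
            Polynomial.X * Polynomial.C (T (-1))]
          g : Polynomial (LaurentPolynomial k)).coeff n).coeff m = 0 := by
  induction g using MvPolynomial.induction_on with
  | C a =>
    intro n m hm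
    simp only [MvPolynomial.aeval_C]
    rw [show (algebraMap k (Polynomial (LaurentPolynomial k))) a
        = Polynomial.C (AddMonoidAlgebra.single 0 a) from rfl, Polynomial.coeff_C]
    split
    · next h => subst h; exact Finsupp.single_eq_of_ne' (by push_cast at hm ⊢; omega)
    · rfl
  | add p q hp hq =>
    intro n m hm
    rw [map_add, Polynomial.coeff_add, AddMonoidAlgebra.coeff_add, Finsupp.add_apply, hp n m hm, hq n m hm, add_zero]
  | mul_X p i hp =>
    intro n m hm
    rw [map_mul, MvPolynomial.aeval_X]
    fin_cases i
    · simp only [Fin.mk_zero, Fin.isValue, Matrix.cons_val_zero]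
      rw [Polynomial.coeff_mul_C, laurent_mul_T_apply]
      exact hp n (m - (-1)) (by omega)
    · simp only [Fin.mk_one, Fin.isValue, Matrix.cons_val_one, Matrix.head_cons, Matrix.cons_val_zero]
      rw [← mul_assoc, Polynomial.coeff_mul_C, laurent_mul_T_apply]
      cases n with
      | zero => rw [Polynomial.coeff_mul_X_zero]; rfl
      | succ n =>
        rw [Polynomial.coeff_mul_X]
        exact hp n (m - (-1)) (by push_cast at hm ⊢; omega)

/-- `H¹(U, O_U) ≠ 0` for `U = ℙ²_k − {P₀}`, computed by the Čech complex of the cover of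
`U` by the two standard affine charts `U₀ = {x ≠ 0} ≅ 𝔸²` (coordinates `u = y/x`,
`v = z/x`) and `U₁ = {y ≠ 0} ≅ 𝔸²` (coordinates `s = x/y = 1/u`, `t = z/y = v/u`),
whose intersection is `Spec k[u, u⁻¹, v]`.  Since the cover has two elements, `H¹` is
the cokernel of the Čech differential
`Γ(U₀, O) × Γ(U₁, O) → Γ(U₀ ∩ U₁, O), (f, g) ↦ f − g`, so `H¹(U, O_U) ≠ 0` says exactly
that this map is not surjective.  Here `Γ(U₀ ∩ U₁, O) = k[u, u⁻¹, v]` is realized as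
polynomials in `v` (`Polynomial.X`) with Laurent-polynomial coefficients in `u`. -/
theorem cech_H1_of_projective_plane_minus_point_ne_zero
    (k : Type*) [Field k] :
    ¬ Function.Surjective
      (fun fg : MvPolynomial (Fin 2) k × MvPolynomial (Fin 2) k =>
        (MvPolynomial.aeval
            ![(Polynomial.C (T 1) : Polynomial (LaurentPolynomial k)), Polynomial.X]
            fg.1 : Polynomial (LaurentPolynomial k)) -
        MvPolynomial.aeval
            ![(Polynomial.C (T (-1)) : Polynomial (LaurentPolynomial k)),
              Polynomial.X * Polynomial.C (T (-1))]
            fg.2) := by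
  intro hsurj
  obtain ⟨⟨f, g⟩, hfg⟩ := hsurj (Polynomial.C (T (-1)) * Polynomial.X ^ 2)
  have h := congrArg (fun p : Polynomial (LaurentPolynomial k) => (p.coeff 2).coeff (-1)) hfg
  simp only [Polynomial.coeff_sub] at h
  rw [AddMonoidAlgebra.coeff_sub, Finsupp.sub_apply, chart1_coeff f 2 (-1) (by omega), chart2_coeff g 2 (-1) (by norm_num),
    sub_zero] at h
  have hT : ((T (-1) : LaurentPolynomial k)).coeff (-1) = (1 : k) := Finsupp.single_eq_same
  rw [Polynomial.coeff_C_mul, Polynomial.coeff_X_pow, if_pos rfl, mul_one, hT] at h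
  exact one_ne_zero h.symm
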